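/- Let f : ℝ → ℝ be C¹ with f(t) ≥ d > 0 and |f'(t)| ≤ 2β for all t, and set β* := (4β)^{−1}, so that the maps t ↦ t − β* f(t) and t ↦ t + β* f(t) are strictly increasing bijections of ℝ. Given T ∈ ℝ, set T̂ := T − β* f(T), let T₁ be the unique real number with T₁ + β* f(T₁) = T̂, and let T₂ be the unique real number with T₂ − β* f(T₂) = T. Then T₁ ≤ T̂ ≤ T ≤ T₂, and there exists a constant C > 0 depending only on β such that ∫_{T₁}^{T₂} f(τ)^{−3} dτ ≤ C f(T)^{−2}. -/

import Mathlib

open Set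

/-- with `β* = (4β)⁻¹`, `T̂ = T − β* f(T)`, `T₁` defined by
`T₁ + β* f(T₁) = T̂` and `T₂` defined by `T₂ − β* f(T₂) = T`, one has
`T₁ ≤ T̂ ≤ T ≤ T₂` and `∫_{T₁}^{T₂} f(τ)^{−3} dτ ≤ C f(T)^{−2}` with `C` depending
only on `β`. -/
theorem stmt_18 (β : ℝ) (hβ : 0 ≤ β) :
    ∃ C : ℝ, 0 < C ∧
      ∀ (f : ℝ → ℝ) (d : ℝ),
        0 < d → (∀ t : ℝ, d ≤ f t) →
        ContDiff ℝ 1 f →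
        (∀ t : ℝ, |deriv f t| ≤ 2 * β) →
        ∀ T T₁ T₂ : ℝ,
          T₁ + (4 * β)⁻¹ * f T₁ = T - (4 * β)⁻¹ * f T →
          T₂ - (4 * β)⁻¹ * f T₂ = T →
          T₁ ≤ T - (4 * β)⁻¹ * f T ∧ T - (4 * β)⁻¹ * f T ≤ T ∧ T ≤ T₂ ∧
            (∫ τ in T₁..T₂, ((f τ) ^ 3)⁻¹) ≤ C * ((f T) ^ 2)⁻¹ := by
  rcases eq_or_lt_of_le hβ with hβ0 | hβpos
  · -- degenerate case β = 0 : (4*β)⁻¹ = 0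
    refine ⟨1, one_pos, ?_⟩
    intro f d hd hfd hf hderiv T T₁ T₂ h1 h2
    subst hβ0
    simp only [mul_zero, inv_zero, zero_mul, add_zero, sub_zero] at h1 h2 ⊢
    have hfT : 0 < f T := lt_of_lt_of_le hd (hfd T)
    rw [h1, ← h2]
    simp only [intervalIntegral.integral_same]
    exact ⟨le_rfl, le_rfl, le_rfl, by positivity⟩
  · refine ⟨96 / β, by positivity, ?_⟩
    intro f d hd hfd hf hderiv T T₁ T₂ h1 h2
    set c : ℝ := (4 * β)⁻¹ with hc
    have hcpos : 0 < c := by positivity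
    have hfT : 0 < f T := lt_of_lt_of_le hd (hfd T)
    have hfT₁ : 0 < f T₁ := lt_of_lt_of_le hd (hfd T₁)
    have hfT₂ : 0 < f T₂ := lt_of_lt_of_le hd (hfd T₂)
    -- Lipschitz bound
    have hlip : ∀ s t : ℝ, |f s - f t| ≤ 2 * β * |s - t| := by
      have hL : LipschitzWith (Real.toNNReal (2 * β)) f := by
        apply lipschitzWith_of_nnnorm_deriv_le (hf.differentiable one_ne_zero)
        intro x
        have : ‖deriv f x‖ ≤ ((Real.toNNReal (2 * β)) : ℝ) := by
          rw [Real.coe_toNNReal _ (by positivity)]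
          simpa [Real.norm_eq_abs] using hderiv x
        exact_mod_cast this
      intro s t
      have := hL.dist_le_mul s t
      rw [Real.dist_eq, Real.dist_eq, Real.coe_toNNReal _ (by positivity)] at this
      exact this
    have hcβ : 2 * β * c = 1 / 2 := by
      rw [hc]; field_simp; ring
    -- orderings
    have hT1 : T₁ ≤ T - c * f T := by nlinarith [mul_pos hcpos hfT₁]
    have hT2 : T - c * f T ≤ T := by nlinarith [mul_pos hcpos hfT]
    have hT3 : T ≤ T₂ := by nlinarith [mul_pos hcpos hfT₂]
    -- T - T₁ = c * (f T + f T₁)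
    have hTT₁ : T - T₁ = c * (f T + f T₁) := by linarith [h1]
    have hTT₂ : T₂ - T = c * f T₂ := by linarith [h2]
    -- f T₁ ≤ 3 f T
    have hlip1 := hlip T₁ T
    have habs1 : f T₁ - f T ≤ 2 * β * (T - T₁) := by
      have h' : |T₁ - T| = T - T₁ := by
        rw [abs_sub_comm, abs_of_nonneg (by linarith)]
      calc f T₁ - f T ≤ |f T₁ - f T| := le_abs_self _
        _ ≤ 2 * β * |T₁ - T| := hlip1
        _ = 2 * β * (T - T₁) := by rw [h']
    have hbound1 : f T₁ ≤ 3 * f T := by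
      rw [hTT₁] at habs1
      nlinarith [hcβ]
    have hlip2 := hlip T₂ T
    have habs2 : f T₂ - f T ≤ 2 * β * (T₂ - T) := by
      have h' : |T₂ - T| = T₂ - T := abs_of_nonneg (by linarith)
      calc f T₂ - f T ≤ |f T₂ - f T| := le_abs_self _
        _ ≤ 2 * β * |T₂ - T| := hlip2
        _ = 2 * β * (T₂ - T) := by rw [h']
    have hbound2 : f T₂ ≤ 2 * f T := by
      rw [hTT₂] at habs2
      nlinarith [hcβ]
    have hT12 : T₁ ≤ T₂ := by linarith [mul_pos hcpos hfT]
    -- length bound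
    have hlen : T₂ - T₁ ≤ 3 / (2 * β) * f T := by
      have e1 : T - T₁ ≤ 4 * c * f T := by rw [hTT₁]; nlinarith
      have e2 : T₂ - T ≤ 2 * c * f T := by rw [hTT₂]; nlinarith
      have hc' : c = 1 / (4 * β) := by rw [hc, inv_eq_one_div]
      rw [hc'] at e1 e2
      have h4 : (4 : ℝ) * (1 / (4 * β)) = 1 / β := by field_simp
      have h2' : (2 : ℝ) * (1 / (4 * β)) = 1 / (2 * β) := by field_simp; ring
      rw [h4] at e1; rw [h2'] at e2
      have : 1 / β * f T + 1 / (2 * β) * f T = 3 / (2 * β) * f T := by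
        field_simp; ring
      linarith
    -- pointwise lower bound f τ ≥ f T / 4 on [T₁, T₂]
    have hpt : ∀ τ ∈ Icc T₁ T₂, f T / 4 ≤ f τ := by
      intro τ hτ
      rcases le_total τ T with hτT | hτT
      · -- τ ∈ [T₁, T]
        have l1 : f T - f τ ≤ 2 * β * (T - τ) := by
          have := hlip T τ
          rw [abs_of_nonneg (by linarith : (0:ℝ) ≤ T - τ)] at this
          calc f T - f τ ≤ |f T - f τ| := le_abs_self _
            _ ≤ 2 * β * (T - τ) := this
        have l2 : f T₁ - f τ ≤ 2 * β * (τ - T₁) := by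
          have := hlip T₁ τ
          rw [abs_sub_comm T₁ τ, abs_of_nonneg (by linarith [hτ.1] : (0:ℝ) ≤ τ - T₁)] at this
          calc f T₁ - f τ ≤ |f T₁ - f τ| := le_abs_self _
            _ ≤ 2 * β * (τ - T₁) := this
        -- 2 f τ ≥ f T + f T₁ - 2β (T - T₁) = (1/2)(f T + f T₁)
        have key : 2 * β * (T - T₁) = (f T + f T₁) / 2 := by
          rw [hTT₁, show 2 * β * (c * (f T + f T₁)) = (2 * β * c) * (f T + f T₁) by ring,
            hcβ]; ring
        have hsum : 2 * β * (T - τ) + 2 * β * (τ - T₁) = 2 * β * (T - T₁) := by ring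
        linarith [hfT₁.le]
      · -- τ ∈ [T, T₂]
        have l1 : f T - f τ ≤ 2 * β * (τ - T) := by
          have := hlip T τ
          rw [abs_sub_comm T τ, abs_of_nonneg (by linarith : (0:ℝ) ≤ τ - T)] at this
          linarith [le_abs_self (f T - f τ), abs_sub_comm (f T) (f τ) ▸ this]
        have l2 : f T₂ - f τ ≤ 2 * β * (T₂ - τ) := by
          have := hlip T₂ τ
          rw [abs_of_nonneg (by linarith [hτ.2] : (0:ℝ) ≤ T₂ - τ)] at this
          calc f T₂ - f τ ≤ |f T₂ - f τ| := le_abs_self _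
            _ ≤ 2 * β * (T₂ - τ) := this
        have key : 2 * β * (T₂ - T) = f T₂ / 2 := by
          rw [hTT₂, show 2 * β * (c * f T₂) = (2 * β * c) * f T₂ by ring, hcβ]; ring
        have hsum : 2 * β * (τ - T) + 2 * β * (T₂ - τ) = 2 * β * (T₂ - T) := by ring
        linarith
    -- integral bound
    have hcont : ContinuousOn (fun τ => ((f τ) ^ 3)⁻¹) (Icc T₁ T₂) := by
      apply ContinuousOn.inv₀
      · exact (hf.continuous.pow 3).continuousOn
      · intro τ hτ
        have := lt_of_lt_of_le hd (hfd τ)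
        positivity
    have hInt : IntervalIntegrable (fun τ => ((f τ) ^ 3)⁻¹) MeasureTheory.volume T₁ T₂ := by
      apply ContinuousOn.intervalIntegrable
      rwa [uIcc_of_le hT12]
    have hmono : (∫ τ in T₁..T₂, ((f τ) ^ 3)⁻¹) ≤ ∫ τ in T₁..T₂, ((f T / 4) ^ 3)⁻¹ := by
      apply intervalIntegral.integral_mono_on hT12 hInt intervalIntegrable_const
      intro τ hτ
      have h1' := hpt τ hτ
      have hfτ : 0 < f τ := lt_of_lt_of_le hd (hfd τ)
      have h4 : (0:ℝ) < f T / 4 := by positivity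
      apply inv_anti₀ (by positivity)
      exact pow_le_pow_left₀ (le_of_lt h4) h1' 3
    have hconst : (∫ τ in T₁..T₂, ((f T / 4) ^ 3)⁻¹) = (T₂ - T₁) * ((f T / 4) ^ 3)⁻¹ := by
      rw [intervalIntegral.integral_const, smul_eq_mul]
    have hfinal : (T₂ - T₁) * ((f T / 4) ^ 3)⁻¹ ≤ 96 / β * ((f T) ^ 2)⁻¹ := by
      have heq : ((f T / 4) ^ 3)⁻¹ = 64 * ((f T) ^ 3)⁻¹ := by
        field_simp; ring
      rw [heq]
      have hnn : (0:ℝ) ≤ 64 * ((f T) ^ 3)⁻¹ := by positivity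
      calc (T₂ - T₁) * (64 * ((f T) ^ 3)⁻¹)
          ≤ (3 / (2 * β) * f T) * (64 * ((f T) ^ 3)⁻¹) :=
            mul_le_mul_of_nonneg_right hlen hnn
        _ = 96 / β * ((f T) ^ 2)⁻¹ := by
            field_simp
            ring
    exact ⟨hT1, hT2, hT3, by linarith [hmono, hconst ▸ hmono, hconst, hfinal]⟩
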